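/- Under the same hypotheses as the previous continuity equation (Λ, φ, α C², satisfying the reduced Einstein system, α > 0, (∂xα)² ≠ (∂tα)²), with e and p defined as there, one has ∂t e + ∂x p = 4 sinh²(Λ)((∂tφ)² − (∂xφ)²) + (∂tΛ)² − (∂xΛ)² + ∂x(∂xα/α) − ∂t(∂tα/α). -/

import Mathlib

open Real

noncomputable def pt (f : ℝ → ℝ → ℝ) (t x : ℝ) : ℝ := deriv (fun s => f s x) t

noncomputable def px (f : ℝ → ℝ → ℝ) (t x : ℝ) : ℝ := deriv (fun y => f t y) x

/-- κ = α / ((∂xα)² − (∂tα)²). -/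
noncomputable def kap (α : ℝ → ℝ → ℝ) (t x : ℝ) : ℝ :=
  α t x / ((px α t x) ^ 2 - (pt α t x) ^ 2)

/-- h₁ density (full version, including the α-terms). -/
noncomputable def h1 (Λ φ α : ℝ → ℝ → ℝ) (t x : ℝ) : ℝ :=
  (px α t x) ^ 2 / (α t x) ^ 2 + (pt α t x) ^ 2 / (α t x) ^ 2
    + (pt Λ t x) ^ 2 + (px Λ t x) ^ 2
    + 4 * Real.sinh (Λ t x) ^ 2 * ((pt φ t x) ^ 2 + (px φ t x) ^ 2)

/-- h₂ density (full version, including the α-term). -/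
noncomputable def h2 (Λ φ α : ℝ → ℝ → ℝ) (t x : ℝ) : ℝ :=
  px α t x * pt α t x / (α t x) ^ 2 + pt Λ t x * px Λ t x
    + 4 * Real.sinh (Λ t x) ^ 2 * (pt φ t x * px φ t x)

/-- Energy density `e = κ(∂tα h₁ − 2 ∂xα h₂)`. -/
noncomputable def eDen (Λ φ α : ℝ → ℝ → ℝ) (t x : ℝ) : ℝ :=
  kap α t x * (pt α t x * h1 Λ φ α t x - 2 * px α t x * h2 Λ φ α t x)

/-- Momentum density `p = κ(∂xα h₁ − 2 ∂tα h₂)`. -/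
noncomputable def pDen (Λ φ α : ℝ → ℝ → ℝ) (t x : ℝ) : ℝ :=
  kap α t x * (px α t x * h1 Λ φ α t x - 2 * pt α t x * h2 Λ φ α t x)

section helpers
variable (f : ℝ → ℝ → ℝ)

private lemma lineT (F : ℝ × ℝ → ℝ) (hF : Differentiable ℝ F) (t x : ℝ) :
    HasDerivAt (fun s => F (s, x)) (fderiv ℝ F (t, x) (1, 0)) t := by
  have h1 : HasDerivAt (fun s : ℝ => (s, x)) ((1:ℝ), (0:ℝ)) t :=
    (hasDerivAt_id t).prodMk (hasDerivAt_const t x)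
  exact (hF.differentiableAt.hasFDerivAt).comp_hasDerivAt t h1

private lemma lineX (F : ℝ × ℝ → ℝ) (hF : Differentiable ℝ F) (t x : ℝ) :
    HasDerivAt (fun y => F (t, y)) (fderiv ℝ F (t, x) (0, 1)) x := by
  have h1 : HasDerivAt (fun y : ℝ => (t, y)) ((0:ℝ), (1:ℝ)) x :=
    (hasDerivAt_const x t).prodMk (hasDerivAt_id x)
  exact (hF.differentiableAt.hasFDerivAt).comp_hasDerivAt x h1

variable (hf : ContDiff ℝ 2 (fun p : ℝ × ℝ => f p.1 p.2))
include hf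

lemma hasDerivAt_ptf (t x : ℝ) : HasDerivAt (fun s => f s x) (pt f t x) t := by
  have H : HasDerivAt (fun s => f s x)
      (fderiv ℝ (fun p : ℝ × ℝ => f p.1 p.2) (t, x) (1, 0)) t :=
    lineT (fun p : ℝ × ℝ => f p.1 p.2) (hf.differentiable two_ne_zero) t x
  show HasDerivAt _ (deriv (fun s => f s x) t) t
  exact H.deriv ▸ H

lemma hasDerivAt_pxf (t x : ℝ) : HasDerivAt (fun y => f t y) (px f t x) x := by
  have H : HasDerivAt (fun y => f t y)
      (fderiv ℝ (fun p : ℝ × ℝ => f p.1 p.2) (t, x) (0, 1)) x :=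
    lineX (fun p : ℝ × ℝ => f p.1 p.2) (hf.differentiable two_ne_zero) t x
  show HasDerivAt _ (deriv (fun y => f t y) x) x
  exact H.deriv ▸ H

lemma pt_eq_fderiv (t x : ℝ) :
    pt f t x = fderiv ℝ (fun p : ℝ × ℝ => f p.1 p.2) (t, x) (1, 0) := by
  have H : HasDerivAt (fun s => f s x)
      (fderiv ℝ (fun p : ℝ × ℝ => f p.1 p.2) (t, x) (1, 0)) t :=
    lineT (fun p : ℝ × ℝ => f p.1 p.2) (hf.differentiable two_ne_zero) t x
  show deriv (fun s => f s x) t = _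
  exact H.deriv

lemma px_eq_fderiv (t x : ℝ) :
    px f t x = fderiv ℝ (fun p : ℝ × ℝ => f p.1 p.2) (t, x) (0, 1) := by
  have H : HasDerivAt (fun y => f t y)
      (fderiv ℝ (fun p : ℝ × ℝ => f p.1 p.2) (t, x) (0, 1)) x :=
    lineX (fun p : ℝ × ℝ => f p.1 p.2) (hf.differentiable two_ne_zero) t x
  show deriv (fun y => f t y) x = _
  exact H.deriv

private lemma cdG (v : ℝ × ℝ) :
    ContDiff ℝ 1 (fun p : ℝ × ℝ => fderiv ℝ (fun q : ℝ × ℝ => f q.1 q.2) p v) :=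
  (hf.fderiv_right (m := 1) (by norm_num)).clm_apply contDiff_const

lemma hasDerivAt_pt_ptf (t x : ℝ) :
    HasDerivAt (fun s => pt f s x) (pt (pt f) t x) t := by
  have H : HasDerivAt (fun s => fderiv ℝ (fun q : ℝ × ℝ => f q.1 q.2) (s, x) (1, 0))
      (fderiv ℝ (fun p : ℝ × ℝ => fderiv ℝ (fun q : ℝ × ℝ => f q.1 q.2) p (1, 0)) (t, x) (1, 0))
      t := lineT _ ((cdG f hf (1,0)).differentiable one_ne_zero) t x
  have he : (fun s => pt f s x) = fun s =>
      fderiv ℝ (fun q : ℝ × ℝ => f q.1 q.2) (s, x) (1, 0) :=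
    funext fun s => pt_eq_fderiv f hf s x
  show HasDerivAt _ (deriv (fun s => pt f s x) t) t
  rw [he]
  exact H.deriv ▸ H

lemma hasDerivAt_px_ptf (t x : ℝ) :
    HasDerivAt (fun y => pt f t y) (px (pt f) t x) x := by
  have H : HasDerivAt (fun y => fderiv ℝ (fun q : ℝ × ℝ => f q.1 q.2) (t, y) (1, 0))
      (fderiv ℝ (fun p : ℝ × ℝ => fderiv ℝ (fun q : ℝ × ℝ => f q.1 q.2) p (1, 0)) (t, x) (0, 1))
      x := lineX _ ((cdG f hf (1,0)).differentiable one_ne_zero) t x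
  have he : (fun y => pt f t y) = fun y =>
      fderiv ℝ (fun q : ℝ × ℝ => f q.1 q.2) (t, y) (1, 0) :=
    funext fun y => pt_eq_fderiv f hf t y
  show HasDerivAt _ (deriv (fun y => pt f t y) x) x
  rw [he]
  exact H.deriv ▸ H

lemma hasDerivAt_pt_pxf (t x : ℝ) :
    HasDerivAt (fun s => px f s x) (pt (px f) t x) t := by
  have H : HasDerivAt (fun s => fderiv ℝ (fun q : ℝ × ℝ => f q.1 q.2) (s, x) (0, 1))
      (fderiv ℝ (fun p : ℝ × ℝ => fderiv ℝ (fun q : ℝ × ℝ => f q.1 q.2) p (0, 1)) (t, x) (1, 0))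
      t := lineT _ ((cdG f hf (0,1)).differentiable one_ne_zero) t x
  have he : (fun s => px f s x) = fun s =>
      fderiv ℝ (fun q : ℝ × ℝ => f q.1 q.2) (s, x) (0, 1) :=
    funext fun s => px_eq_fderiv f hf s x
  show HasDerivAt _ (deriv (fun s => px f s x) t) t
  rw [he]
  exact H.deriv ▸ H

lemma hasDerivAt_px_pxf (t x : ℝ) :
    HasDerivAt (fun y => px f t y) (px (px f) t x) x := by
  have H : HasDerivAt (fun y => fderiv ℝ (fun q : ℝ × ℝ => f q.1 q.2) (t, y) (0, 1))
      (fderiv ℝ (fun p : ℝ × ℝ => fderiv ℝ (fun q : ℝ × ℝ => f q.1 q.2) p (0, 1)) (t, x) (0, 1))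
      x := lineX _ ((cdG f hf (0,1)).differentiable one_ne_zero) t x
  have he : (fun y => px f t y) = fun y =>
      fderiv ℝ (fun q : ℝ × ℝ => f q.1 q.2) (t, y) (0, 1) :=
    funext fun y => px_eq_fderiv f hf t y
  show HasDerivAt _ (deriv (fun y => px f t y) x) x
  rw [he]
  exact H.deriv ▸ H

lemma clairaut (t x : ℝ) : pt (px f) t x = px (pt f) t x := by
  have hd : DifferentiableAt ℝ (fderiv ℝ (fun q : ℝ × ℝ => f q.1 q.2)) (t, x) :=
    ((hf.fderiv_right (m := 1) (by norm_num)).differentiable one_ne_zero).differentiableAt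
  have h1 : pt (px f) t x =
      fderiv ℝ (fun p : ℝ × ℝ => fderiv ℝ (fun q : ℝ × ℝ => f q.1 q.2) p ((0:ℝ),(1:ℝ)))
        (t,x) (1,0) := by
    have H : HasDerivAt (fun s => fderiv ℝ (fun q : ℝ × ℝ => f q.1 q.2) (s, x) (0, 1))
        (fderiv ℝ (fun p : ℝ × ℝ => fderiv ℝ (fun q : ℝ × ℝ => f q.1 q.2) p (0, 1)) (t, x) (1, 0))
        t := lineT _ ((cdG f hf (0,1)).differentiable one_ne_zero) t x
    have he : (fun s => px f s x) = fun s =>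
        fderiv ℝ (fun q : ℝ × ℝ => f q.1 q.2) (s, x) (0, 1) :=
      funext fun s => px_eq_fderiv f hf s x
    show deriv (fun s => px f s x) t = _
    rw [he]; exact H.deriv
  have h2 : px (pt f) t x =
      fderiv ℝ (fun p : ℝ × ℝ => fderiv ℝ (fun q : ℝ × ℝ => f q.1 q.2) p ((1:ℝ),(0:ℝ)))
        (t,x) (0,1) := by
    have H : HasDerivAt (fun y => fderiv ℝ (fun q : ℝ × ℝ => f q.1 q.2) (t, y) (1, 0))
        (fderiv ℝ (fun p : ℝ × ℝ => fderiv ℝ (fun q : ℝ × ℝ => f q.1 q.2) p (1, 0)) (t, x) (0, 1))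
        x := lineX _ ((cdG f hf (1,0)).differentiable one_ne_zero) t x
    have he : (fun y => pt f t y) = fun y =>
        fderiv ℝ (fun q : ℝ × ℝ => f q.1 q.2) (t, y) (1, 0) :=
      funext fun y => pt_eq_fderiv f hf t y
    show deriv (fun y => pt f t y) x = _
    rw [he]; exact H.deriv
  rw [h1, h2, fderiv_clm_apply hd (differentiableAt_const _),
    fderiv_clm_apply hd (differentiableAt_const _)]
  simp only [ContinuousLinearMap.add_apply, ContinuousLinearMap.comp_apply,
    ContinuousLinearMap.flip_apply, fderiv_const, fderiv_fun_const, map_zero, Pi.zero_apply, ContinuousLinearMap.zero_apply,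
    ContinuousLinearMap.zero_comp, zero_add, add_zero]
  exact ((hf.contDiffAt).isSymmSndFDerivAt (by norm_num)).eq _ _ ▸ rfl

end helpers

set_option maxRecDepth 100000
set_option maxHeartbeats 2000000 in
private lemma hasDerivAt_big
    (u ut ux l lt lx gt gx : ℝ → ℝ) (s du dut dux dl dlt dlx dgt dgx : ℝ)
    (hu : HasDerivAt u du s) (hut : HasDerivAt ut dut s) (hux : HasDerivAt ux dux s)
    (hl : HasDerivAt l dl s) (hlt : HasDerivAt lt dlt s) (hlx : HasDerivAt lx dlx s)
    (hgt : HasDerivAt gt dgt s) (hgx : HasDerivAt gx dgx s)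
    (hu0 : u s ≠ 0) (hD0 : (ux s)^2 - (ut s)^2 ≠ 0) :
    HasDerivAt (fun r => u r / ((ux r)^2 - (ut r)^2) * (ut r * ((ux r)^2/(u r)^2 + (ut r)^2/(u r)^2 + (lt r)^2 + (lx r)^2 + 4*Real.sinh (l r)^2*((gt r)^2+(gx r)^2)) - 2 * (ux r) * ((ux r) * (ut r)/(u r)^2 + (lt r) * (lx r) + 4*Real.sinh (l r)^2*((gt r) * (gx r)))))
      ((1*u s*ut s*ux s^4*du + (-2)*u s*ut s^3*ux s^2*du + 1*u s*ut s^5*du + (-1)*u s^2*ux s^4*dut + 2*u s^2*ut s^2*ux s^2*dut + (-1)*u s^2*ut s^4*dut + (-8)*u s^3*ux s^3*du*gt s*gx s*Real.sinh (l s)^2 + (-2)*u s^3*ux s^3*du*lt s*lx s + 4*u s^3*ut s*ux s^2*du*gx s^2*Real.sinh (l s)^2 + 4*u s^3*ut s*ux s^2*du*gt s^2*Real.sinh (l s)^2 + 1*u s^3*ut s*ux s^2*du*lx s^2 + 1*u s^3*ut s*ux s^2*du*lt s^2 + 8*u s^3*ut s^2*ux s*du*gt s*gx s*Real.sinh (l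 s)^2 + 2*u s^3*ut s^2*ux s*du*lt s*lx s + (-4)*u s^3*ut s^3*du*gx s^2*Real.sinh (l s)^2 + (-4)*u s^3*ut s^3*du*gt s^2*Real.sinh (l s)^2 + (-1)*u s^3*ut s^3*du*lx s^2 + (-1)*u s^3*ut s^3*du*lt s^2 + 8*u s^4*ux s^2*dux*gt s*gx s*Real.sinh (l s)^2 + 2*u s^4*ux s^2*dux*lt s*lx s + 4*u s^4*ux s^2*dut*gx s^2*Real.sinh (l s)^2 + 4*u s^4*ux s^2*dut*gt s^2*Real.sinh (l s)^2 + 1*u s^4*ux s^2*dut*lx s^2 + 1*u s^4*ux s^2*dut*lt s^2 + (-8)*u s^4*ux s^3*gx s*dgt*Real.sinh (l s)^2 + (-8)*u s^4*ux s^3*gt s*dgx*Real.sinh (l s)^2 + (-16)*u s^4*ux s^3*dl*gt s*gx s*Real.sinh (l s)*Real.cosh (l s) + (-2)*u s^4*ux s^3*lx s*dlt + (-2)*u s^4*ux s^3*lt s*dlx + (-8)*u s^4*ut s*ux s*dux*gx s^2*Real.sinh (l s)^2 + (-8)*u s^4*ut s*ux s*dux*gt s^2*Real.sinh (l s)^2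 + (-2)*u s^4*ut s*ux s*dux*lx s^2 + (-2)*u s^4*ut s*ux s*dux*lt s^2 + (-16)*u s^4*ut s*ux s*dut*gt s*gx s*Real.sinh (l s)^2 + (-4)*u s^4*ut s*ux s*dut*lt s*lx s + 8*u s^4*ut s*ux s^2*gx s*dgx*Real.sinh (l s)^2 + 8*u s^4*ut s*ux s^2*gt s*dgt*Real.sinh (l s)^2 + 8*u s^4*ut s*ux s^2*dl*gx s^2*Real.sinh (l s)*Real.cosh (l s) + 8*u s^4*ut s*ux s^2*dl*gt s^2*Real.sinh (l s)*Real.cosh (l s) + 2*u s^4*ut s*ux s^2*lx s*dlx + 2*u s^4*ut s*ux s^2*lt s*dlt + 8*u s^4*ut s^2*dux*gt s*gx s*Real.sinh (l s)^2 + 2*u s^4*ut s^2*dux*lt s*lx s + 4*u s^4*ut s^2*dut*gx s^2*Real.sinh (l s)^2 + 4*u s^4*ut s^2*dut*gt s^2*Real.sinh (l s)^2 + 1*u s^4*ut s^2*dut*lx s^2 + 1*u s^4*ut s^2*dut*lt s^2 + 8*u s^4*ut s^2*ux s*gx s*dgt*Real.sinh (l s)^2 + 8*u s^4*ut s^2*ux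 s*gt s*dgx*Real.sinh (l s)^2 + 16*u s^4*ut s^2*ux s*dl*gt s*gx s*Real.sinh (l s)*Real.cosh (l s) + 2*u s^4*ut s^2*ux s*lx s*dlt + 2*u s^4*ut s^2*ux s*lt s*dlx + (-8)*u s^4*ut s^3*gx s*dgx*Real.sinh (l s)^2 + (-8)*u s^4*ut s^3*gt s*dgt*Real.sinh (l s)^2 + (-8)*u s^4*ut s^3*dl*gx s^2*Real.sinh (l s)*Real.cosh (l s) + (-8)*u s^4*ut s^3*dl*gt s^2*Real.sinh (l s)*Real.cosh (l s) + (-2)*u s^4*ut s^3*lx s*dlx + (-2)*u s^4*ut s^3*lt s*dlt) / ((u s)^3 * ((ux s)^2 - (ut s)^2)^2)) s := by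
  have hU20 : (u s)^2 ≠ 0 := pow_ne_zero _ hu0
  have hD : HasDerivAt (fun r => (ux r)^2 - (ut r)^2) (2*ux s*dux - 2*ut s*dut) s := by
    refine ((hux.fun_pow 2).sub (hut.fun_pow 2)).congr_deriv ?_
    norm_num
    try ring
  have hU2 : HasDerivAt (fun r => (u r)^2) (2*u s*du) s := by
    refine (hu.fun_pow 2).congr_deriv ?_
    norm_num
    try ring
  have hS2 : HasDerivAt (fun r => Real.sinh (l r)^2)
      (2*Real.sinh (l s)*Real.cosh (l s)*dl) s := by
    refine ((hl.sinh).pow 2).congr_deriv ?_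
    norm_num
    try ring
  have hK : HasDerivAt (fun r => u r / ((ux r)^2 - (ut r)^2))
      ((du*((ux s)^2-(ut s)^2) - u s*(2*ux s*dux - 2*ut s*dut))/((ux s)^2-(ut s)^2)^2) s :=
    hu.div hD hD0
  have hH1 := ((((((hux.fun_pow 2).div hU2 hU20).add ((hut.fun_pow 2).div hU2 hU20)).add
      (hlt.fun_pow 2)).add (hlx.fun_pow 2)).add
      ((hS2.const_mul (4:ℝ)).mul ((hgt.fun_pow 2).add (hgx.fun_pow 2))))
  have hH2 := (((hux.mul hut).div hU2 hU20).add (hlt.mul hlx)).add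
      ((hS2.const_mul (4:ℝ)).mul (hgt.mul hgx))
  have h := hK.mul ((hut.mul hH1).sub ((hux.const_mul (2:ℝ)).mul hH2))
  refine h.congr_deriv ?_
  norm_num
  try field_simp
  try ring

set_option maxHeartbeats 2000000 in
private lemma keylemma (A At Ax Att Atx Axx Lt Lx Ltt Ltx Lxx Ft Fx Ftt Ftx Fxx S C : ℝ)
    (hA : A ≠ 0) (hD : Ax^2 - At^2 ≠ 0)
    (e1 : At*Lt + A*Ltt - (Ax*Lx + A*Lxx) = 2*A*(2*S*C)*(Ft^2-Fx^2))
    (e2 : (At*S^2 + A*(2*S*C*Lt))*Ft + A*S^2*Ftt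
        - ((Ax*S^2 + A*(2*S*C*Lx))*Fx + A*S^2*Fxx) = 0)
    (e3 : Att - Axx = 0) :
    (1*A*At*Ax^4*At + (-2)*A*At^3*Ax^2*At + 1*A*At^5*At + (-1)*A^2*Ax^4*Att + 2*A^2*At^2*Ax^2*Att + (-1)*A^2*At^4*Att + (-8)*A^3*Ax^3*At*Ft*Fx*S^2 + (-2)*A^3*Ax^3*At*Lt*Lx + 4*A^3*At*Ax^2*At*Fx^2*S^2 + 4*A^3*At*Ax^2*At*Ft^2*S^2 + 1*A^3*At*Ax^2*At*Lx^2 + 1*A^3*At*Ax^2*At*Lt^2 + 8*A^3*At^2*Ax*At*Ft*Fx*S^2 + 2*A^3*At^2*Ax*At*Lt*Lx + (-4)*A^3*At^3*At*Fx^2*S^2 + (-4)*A^3*At^3*At*Ft^2*S^2 + (-1)*A^3*At^3*At*Lx^2 + (-1)*A^3*At^3*At*Lt^2 + 8*A^4*Ax^2*Atx*Ft*Fx*S^2 + 2*A^4*Ax^2*Atx*Lt*Lx + 4*A^4*Ax^2*Att*Fx^2*S^2 + 4*A^4*Ax^2*Att*Ft^2*S^2 + 1*A^4*Ax^2*Att*Lx^2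 + 1*A^4*Ax^2*Att*Lt^2 + (-8)*A^4*Ax^3*Fx*Ftt*S^2 + (-8)*A^4*Ax^3*Ft*Ftx*S^2 + (-16)*A^4*Ax^3*Lt*Ft*Fx*S*C + (-2)*A^4*Ax^3*Lx*Ltt + (-2)*A^4*Ax^3*Lt*Ltx + (-8)*A^4*At*Ax*Atx*Fx^2*S^2 + (-8)*A^4*At*Ax*Atx*Ft^2*S^2 + (-2)*A^4*At*Ax*Atx*Lx^2 + (-2)*A^4*At*Ax*Atx*Lt^2 + (-16)*A^4*At*Ax*Att*Ft*Fx*S^2 + (-4)*A^4*At*Ax*Att*Lt*Lx + 8*A^4*At*Ax^2*Fx*Ftx*S^2 + 8*A^4*At*Ax^2*Ft*Ftt*S^2 + 8*A^4*At*Ax^2*Lt*Fx^2*S*C + 8*A^4*At*Ax^2*Lt*Ft^2*S*C + 2*A^4*At*Ax^2*Lx*Ltx + 2*A^4*At*Ax^2*Lt*Ltt + 8*A^4*At^2*Atx*Ft*Fx*S^2 + 2*A^4*At^2*Atx*Lt*Lx + 4*A^4*At^2*Att*Fx^2*S^2 + 4*A^4*At^2*Att*Ft^2*S^2 + 1*A^4*At^2*Att*Lx^2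 + 1*A^4*At^2*Att*Lt^2 + 8*A^4*At^2*Ax*Fx*Ftt*S^2 + 8*A^4*At^2*Ax*Ft*Ftx*S^2 + 16*A^4*At^2*Ax*Lt*Ft*Fx*S*C + 2*A^4*At^2*Ax*Lx*Ltt + 2*A^4*At^2*Ax*Lt*Ltx + (-8)*A^4*At^3*Fx*Ftx*S^2 + (-8)*A^4*At^3*Ft*Ftt*S^2 + (-8)*A^4*At^3*Lt*Fx^2*S*C + (-8)*A^4*At^3*Lt*Ft^2*S*C + (-2)*A^4*At^3*Lx*Ltx + (-2)*A^4*At^3*Lt*Ltt) / (A^3 * (Ax^2 - At^2)^2)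
      + -((1*A*Ax*At^4*Ax + (-2)*A*Ax^3*At^2*Ax + 1*A*Ax^5*Ax + (-1)*A^2*At^4*Axx + 2*A^2*Ax^2*At^2*Axx + (-1)*A^2*Ax^4*Axx + (-8)*A^3*At^3*Ax*Fx*Ft*S^2 + (-2)*A^3*At^3*Ax*Lx*Lt + 4*A^3*Ax*At^2*Ax*Ft^2*S^2 + 4*A^3*Ax*At^2*Ax*Fx^2*S^2 + 1*A^3*Ax*At^2*Ax*Lt^2 + 1*A^3*Ax*At^2*Ax*Lx^2 + 8*A^3*Ax^2*At*Ax*Fx*Ft*S^2 + 2*A^3*Ax^2*At*Ax*Lx*Lt + (-4)*A^3*Ax^3*Ax*Ft^2*S^2 + (-4)*A^3*Ax^3*Ax*Fx^2*S^2 + (-1)*A^3*Ax^3*Ax*Lt^2 + (-1)*A^3*Ax^3*Ax*Lx^2 + 8*A^4*At^2*Atx*Fx*Ft*S^2 + 2*A^4*At^2*Atx*Lx*Lt + 4*A^4*At^2*Axx*Ft^2*S^2 + 4*A^4*At^2*Axx*Fx^2*S^2 + 1*A^4*At^2*Axx*Lt^2 + 1*A^4*At^2*Axx*Lx^2 + (-8)*A^4*At^3*Ft*Fxx*S^2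 + (-8)*A^4*At^3*Fx*Ftx*S^2 + (-16)*A^4*At^3*Lx*Fx*Ft*S*C + (-2)*A^4*At^3*Lt*Lxx + (-2)*A^4*At^3*Lx*Ltx + (-8)*A^4*Ax*At*Atx*Ft^2*S^2 + (-8)*A^4*Ax*At*Atx*Fx^2*S^2 + (-2)*A^4*Ax*At*Atx*Lt^2 + (-2)*A^4*Ax*At*Atx*Lx^2 + (-16)*A^4*Ax*At*Axx*Fx*Ft*S^2 + (-4)*A^4*Ax*At*Axx*Lx*Lt + 8*A^4*Ax*At^2*Ft*Ftx*S^2 + 8*A^4*Ax*At^2*Fx*Fxx*S^2 + 8*A^4*Ax*At^2*Lx*Ft^2*S*C + 8*A^4*Ax*At^2*Lx*Fx^2*S*C + 2*A^4*Ax*At^2*Lt*Ltx + 2*A^4*Ax*At^2*Lx*Lxx + 8*A^4*Ax^2*Atx*Fx*Ft*S^2 + 2*A^4*Ax^2*Atx*Lx*Lt + 4*A^4*Ax^2*Axx*Ft^2*S^2 + 4*A^4*Ax^2*Axx*Fx^2*S^2 + 1*A^4*Ax^2*Axx*Lt^2 + 1*A^4*Ax^2*Axx*Lx^2 + 8*A^4*Ax^2*At*Ft*Fxx*S^2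 + 8*A^4*Ax^2*At*Fx*Ftx*S^2 + 16*A^4*Ax^2*At*Lx*Fx*Ft*S*C + 2*A^4*Ax^2*At*Lt*Lxx + 2*A^4*Ax^2*At*Lx*Ltx + (-8)*A^4*Ax^3*Ft*Ftx*S^2 + (-8)*A^4*Ax^3*Fx*Fxx*S^2 + (-8)*A^4*Ax^3*Lx*Ft^2*S*C + (-8)*A^4*Ax^3*Lx*Fx^2*S*C + (-2)*A^4*Ax^3*Lt*Ltx + (-2)*A^4*Ax^3*Lx*Lxx) / (A^3 * (At^2 - Ax^2)^2))
      = (4*S^2*(Ft^2-Fx^2) + Lt^2 - Lx^2 + (Axx*A - Ax*Ax)/A^2 - (Att*A - At*At)/A^2) := by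
  have hDt0 : A^3 * (Ax^2 - At^2)^2 ≠ 0 := mul_ne_zero (pow_ne_zero 3 hA) (pow_ne_zero 2 hD)
  rw [show A^3 * (At^2 - Ax^2)^2 = A^3 * (Ax^2 - At^2)^2 from by ring]
  rw [← sub_eq_add_neg, div_sub_div_same, div_eq_iff hDt0]
  linear_combination (norm := (field_simp; ring1))
    (2*(At*Lt-Ax*Lx)*A^3*(Ax^2-At^2)) * e1
    + (8*(At*Ft-Ax*Fx)*A^3*(Ax^2-At^2)) * e2
    + (A^4*((Ax^2+At^2)*(Lt^2+Lx^2+4*S^2*(Ft^2+Fx^2)) - 4*At*Ax*(Lt*Lx+4*S^2*Ft*Fx))) * e3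

set_option maxHeartbeats 2000000

/-- second modified continuity equation for the reduced
Einstein system. -/
theorem continuity_equation_two
    (Λ φ α : ℝ → ℝ → ℝ)
    (hΛ : ContDiff ℝ 2 (fun p : ℝ × ℝ => Λ p.1 p.2))
    (hφ : ContDiff ℝ 2 (fun p : ℝ × ℝ => φ p.1 p.2))
    (hα : ContDiff ℝ 2 (fun p : ℝ × ℝ => α p.1 p.2))
    (heqΛ : ∀ t x,
      pt (fun t x => α t x * pt Λ t x) t x
        - px (fun t x => α t x * px Λ t x) t x
      = 2 * α t x * Real.sinh (2 * Λ t x) * ((pt φ t x) ^ 2 - (px φ t x) ^ 2))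
    (heqφ : ∀ t x,
      pt (fun t x => α t x * Real.sinh (Λ t x) ^ 2 * pt φ t x) t x
        - px (fun t x => α t x * Real.sinh (Λ t x) ^ 2 * px φ t x) t x = 0)
    (heqα : ∀ t x, pt (pt α) t x - px (px α) t x = 0)
    (hpos : ∀ t x, 0 < α t x)
    (hne : ∀ t x, (px α t x) ^ 2 ≠ (pt α t x) ^ 2) :
    ∀ t x, pt (eDen Λ φ α) t x + px (pDen Λ φ α) t x
      = 4 * Real.sinh (Λ t x) ^ 2 * ((pt φ t x) ^ 2 - (px φ t x) ^ 2)
        + (pt Λ t x) ^ 2 - (px Λ t x) ^ 2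
        + px (fun t x => px α t x / α t x) t x
        - pt (fun t x => pt α t x / α t x) t x := by
  intro t x
  have hA0 : α t x ≠ 0 := (hpos t x).ne'
  have hD0e : (px α t x)^2 - (pt α t x)^2 ≠ 0 := sub_ne_zero.mpr (hne t x)
  have hD0p : (pt α t x)^2 - (px α t x)^2 ≠ 0 := sub_ne_zero.mpr (Ne.symm (hne t x))
  -- t-direction atom derivatives
  have hat := hasDerivAt_ptf α hα t x
  have hatt := hasDerivAt_pt_ptf α hα t x
  have hatx := hasDerivAt_pt_pxf α hα t x
  have hlt := hasDerivAt_ptf Λ hΛ t x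
  have hltt := hasDerivAt_pt_ptf Λ hΛ t x
  have hltx := hasDerivAt_pt_pxf Λ hΛ t x
  have hft := hasDerivAt_ptf φ hφ t x
  have hftt := hasDerivAt_pt_ptf φ hφ t x
  have hftx := hasDerivAt_pt_pxf φ hφ t x
  -- x-direction atom derivatives
  have hax := hasDerivAt_pxf α hα t x
  have haxt := hasDerivAt_px_ptf α hα t x
  have haxx := hasDerivAt_px_pxf α hα t x
  have hlx := hasDerivAt_pxf Λ hΛ t x
  have hlxt := hasDerivAt_px_ptf Λ hΛ t x
  have hlxx := hasDerivAt_px_pxf Λ hΛ t x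
  have hfx := hasDerivAt_pxf φ hφ t x
  have hfxt := hasDerivAt_px_ptf φ hφ t x
  have hfxx := hasDerivAt_px_pxf φ hφ t x
  -- derivative of eDen in t
  have hbigT := hasDerivAt_big (fun s => α s x) (fun s => pt α s x) (fun s => px α s x)
    (fun s => Λ s x) (fun s => pt Λ s x) (fun s => px Λ s x)
    (fun s => pt φ s x) (fun s => px φ s x) t
    (pt α t x) (pt (pt α) t x) (pt (px α) t x) (pt Λ t x) (pt (pt Λ) t x) (pt (px Λ) t x)
    (pt (pt φ) t x) (pt (px φ) t x)
    hat hatt hatx hlt hltt hltx hftt hftx hA0 hD0e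
  have hEt : pt (eDen Λ φ α) t x =
      (1*(α t x)*(pt α t x)*(px α t x)^4*(pt α t x) + (-2)*(α t x)*(pt α t x)^3*(px α t x)^2*(pt α t x) + 1*(α t x)*(pt α t x)^5*(pt α t x) + (-1)*(α t x)^2*(px α t x)^4*(pt (pt α) t x) + 2*(α t x)^2*(pt α t x)^2*(px α t x)^2*(pt (pt α) t x) + (-1)*(α t x)^2*(pt α t x)^4*(pt (pt α) t x) + (-8)*(α t x)^3*(px α t x)^3*(pt α t x)*(pt φ t x)*(px φ t x)*(Real.sinh (Λ t x))^2 + (-2)*(α t x)^3*(px α t x)^3*(pt α t x)*(pt Λ t x)*(px Λ t x) + 4*(α t x)^3*(pt α t x)*(px α t x)^2*(pt α t x)*(px φ t x)^2*(Real.sinh (Λ t x))^2 + 4*(α t x)^3*(pt α t x)*(px α t x)^2*(pt α t x)*(pt φ t x)^2*(Real.sinh (Λ t x))^2 + 1*(α t x)^3*(pt α t x)*(px α t x)^2*(pt α t x)*(px Λ t x)^2 + 1*(α t x)^3*(pt α t x)*(px α t x)^2*(pt α t x)*(pt Λ t x)^2 + 8*(α t x)^3*(pt α t x)^2*(px α t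 x)*(pt α t x)*(pt φ t x)*(px φ t x)*(Real.sinh (Λ t x))^2 + 2*(α t x)^3*(pt α t x)^2*(px α t x)*(pt α t x)*(pt Λ t x)*(px Λ t x) + (-4)*(α t x)^3*(pt α t x)^3*(pt α t x)*(px φ t x)^2*(Real.sinh (Λ t x))^2 + (-4)*(α t x)^3*(pt α t x)^3*(pt α t x)*(pt φ t x)^2*(Real.sinh (Λ t x))^2 + (-1)*(α t x)^3*(pt α t x)^3*(pt α t x)*(px Λ t x)^2 + (-1)*(α t x)^3*(pt α t x)^3*(pt α t x)*(pt Λ t x)^2 + 8*(α t x)^4*(px α t x)^2*(pt (px α) t x)*(pt φ t x)*(px φ t x)*(Real.sinh (Λ t x))^2 + 2*(α t x)^4*(px α t x)^2*(pt (px α) t x)*(pt Λ t x)*(px Λ t x) + 4*(α t x)^4*(px α t x)^2*(pt (pt α) t x)*(px φ t x)^2*(Real.sinh (Λ t x))^2 + 4*(α t x)^4*(px α t x)^2*(pt (pt α) t x)*(pt φ t x)^2*(Real.sinh (Λ t x))^2 + 1*(α t x)^4*(px α t x)^2*(pt (pt α) t x)*(px Λ t x)^2 + 1*(α t x)^4*(px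 α t x)^2*(pt (pt α) t x)*(pt Λ t x)^2 + (-8)*(α t x)^4*(px α t x)^3*(px φ t x)*(pt (pt φ) t x)*(Real.sinh (Λ t x))^2 + (-8)*(α t x)^4*(px α t x)^3*(pt φ t x)*(pt (px φ) t x)*(Real.sinh (Λ t x))^2 + (-16)*(α t x)^4*(px α t x)^3*(pt Λ t x)*(pt φ t x)*(px φ t x)*(Real.sinh (Λ t x))*(Real.cosh (Λ t x)) + (-2)*(α t x)^4*(px α t x)^3*(px Λ t x)*(pt (pt Λ) t x) + (-2)*(α t x)^4*(px α t x)^3*(pt Λ t x)*(pt (px Λ) t x) + (-8)*(α t x)^4*(pt α t x)*(px α t x)*(pt (px α) t x)*(px φ t x)^2*(Real.sinh (Λ t x))^2 + (-8)*(α t x)^4*(pt α t x)*(px α t x)*(pt (px α) t x)*(pt φ t x)^2*(Real.sinh (Λ t x))^2 + (-2)*(α t x)^4*(pt α t x)*(px α t x)*(pt (px α) t x)*(px Λ t x)^2 + (-2)*(α t x)^4*(pt α t x)*(px α t x)*(pt (px α) t x)*(pt Λ t x)^2 + (-16)*(α t x)^4*(pt α t x)*(px α t x)*(pt (pt α) t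 x)*(pt φ t x)*(px φ t x)*(Real.sinh (Λ t x))^2 + (-4)*(α t x)^4*(pt α t x)*(px α t x)*(pt (pt α) t x)*(pt Λ t x)*(px Λ t x) + 8*(α t x)^4*(pt α t x)*(px α t x)^2*(px φ t x)*(pt (px φ) t x)*(Real.sinh (Λ t x))^2 + 8*(α t x)^4*(pt α t x)*(px α t x)^2*(pt φ t x)*(pt (pt φ) t x)*(Real.sinh (Λ t x))^2 + 8*(α t x)^4*(pt α t x)*(px α t x)^2*(pt Λ t x)*(px φ t x)^2*(Real.sinh (Λ t x))*(Real.cosh (Λ t x)) + 8*(α t x)^4*(pt α t x)*(px α t x)^2*(pt Λ t x)*(pt φ t x)^2*(Real.sinh (Λ t x))*(Real.cosh (Λ t x)) + 2*(α t x)^4*(pt α t x)*(px α t x)^2*(px Λ t x)*(pt (px Λ) t x) + 2*(α t x)^4*(pt α t x)*(px α t x)^2*(pt Λ t x)*(pt (pt Λ) t x) + 8*(α t x)^4*(pt α t x)^2*(pt (px α) t x)*(pt φ t x)*(px φ t x)*(Real.sinh (Λ t x))^2 + 2*(α t x)^4*(pt α t x)^2*(pt (px α) t x)*(pt Λ t x)*(px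 Λ t x) + 4*(α t x)^4*(pt α t x)^2*(pt (pt α) t x)*(px φ t x)^2*(Real.sinh (Λ t x))^2 + 4*(α t x)^4*(pt α t x)^2*(pt (pt α) t x)*(pt φ t x)^2*(Real.sinh (Λ t x))^2 + 1*(α t x)^4*(pt α t x)^2*(pt (pt α) t x)*(px Λ t x)^2 + 1*(α t x)^4*(pt α t x)^2*(pt (pt α) t x)*(pt Λ t x)^2 + 8*(α t x)^4*(pt α t x)^2*(px α t x)*(px φ t x)*(pt (pt φ) t x)*(Real.sinh (Λ t x))^2 + 8*(α t x)^4*(pt α t x)^2*(px α t x)*(pt φ t x)*(pt (px φ) t x)*(Real.sinh (Λ t x))^2 + 16*(α t x)^4*(pt α t x)^2*(px α t x)*(pt Λ t x)*(pt φ t x)*(px φ t x)*(Real.sinh (Λ t x))*(Real.cosh (Λ t x)) + 2*(α t x)^4*(pt α t x)^2*(px α t x)*(px Λ t x)*(pt (pt Λ) t x) + 2*(α t x)^4*(pt α t x)^2*(px α t x)*(pt Λ t x)*(pt (px Λ) t x) + (-8)*(α t x)^4*(pt α t x)^3*(px φ t x)*(pt (px φ) t x)*(Real.sinh (Λ t x))^2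 + (-8)*(α t x)^4*(pt α t x)^3*(pt φ t x)*(pt (pt φ) t x)*(Real.sinh (Λ t x))^2 + (-8)*(α t x)^4*(pt α t x)^3*(pt Λ t x)*(px φ t x)^2*(Real.sinh (Λ t x))*(Real.cosh (Λ t x)) + (-8)*(α t x)^4*(pt α t x)^3*(pt Λ t x)*(pt φ t x)^2*(Real.sinh (Λ t x))*(Real.cosh (Λ t x)) + (-2)*(α t x)^4*(pt α t x)^3*(px Λ t x)*(pt (px Λ) t x) + (-2)*(α t x)^4*(pt α t x)^3*(pt Λ t x)*(pt (pt Λ) t x)) / ((α t x)^3 * ((px α t x)^2 - (pt α t x)^2)^2) := by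
    have he : (fun s => eDen Λ φ α s x) = (fun s => α s x / ((px α s x)^2 - (pt α s x)^2) * (pt α s x * ((px α s x)^2/(α s x)^2 + (pt α s x)^2/(α s x)^2 + (pt Λ s x)^2 + (px Λ s x)^2 + 4*Real.sinh (Λ s x)^2*((pt φ s x)^2+(px φ s x)^2)) - 2 * (px α s x) * ((px α s x) * (pt α s x)/(α s x)^2 + (pt Λ s x) * (px Λ s x) + 4*Real.sinh (Λ s x)^2*((pt φ s x) * (px φ s x))))) := by
      funext s
      simp only [eDen, kap, h1, h2]
    show deriv (fun s => eDen Λ φ α s x) t = _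
    rw [he]
    exact hbigT.deriv
  -- derivative of pDen in x
  have hbigX := hasDerivAt_big (fun y => α t y) (fun y => px α t y) (fun y => pt α t y)
    (fun y => Λ t y) (fun y => px Λ t y) (fun y => pt Λ t y)
    (fun y => px φ t y) (fun y => pt φ t y) x
    (px α t x) (px (px α) t x) (px (pt α) t x) (px Λ t x) (px (px Λ) t x) (px (pt Λ) t x)
    (px (px φ) t x) (px (pt φ) t x)
    hax haxx haxt hlx hlxx hlxt hfxx hfxt hA0 hD0p
  have hPx : px (pDen Λ φ α) t x =
      -((1*(α t x)*(px α t x)*(pt α t x)^4*(px α t x) + (-2)*(α t x)*(px α t x)^3*(pt α t x)^2*(px α t x) + 1*(α t x)*(px α t x)^5*(px α t x) + (-1)*(α t x)^2*(pt α t x)^4*(px (px α) t x) + 2*(α t x)^2*(px α t x)^2*(pt α t x)^2*(px (px α) t x) + (-1)*(α t x)^2*(px α t x)^4*(px (px α) t x) + (-8)*(α t x)^3*(pt α t x)^3*(px α t x)*(px φ t x)*(pt φ t x)*(Real.sinh (Λ t x))^2 + (-2)*(α t x)^3*(pt α t x)^3*(px α t x)*(px Λ t x)*(pt Λ t x) +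 4*(α t x)^3*(px α t x)*(pt α t x)^2*(px α t x)*(pt φ t x)^2*(Real.sinh (Λ t x))^2 + 4*(α t x)^3*(px α t x)*(pt α t x)^2*(px α t x)*(px φ t x)^2*(Real.sinh (Λ t x))^2 + 1*(α t x)^3*(px α t x)*(pt α t x)^2*(px α t x)*(pt Λ t x)^2 + 1*(α t x)^3*(px α t x)*(pt α t x)^2*(px α t x)*(px Λ t x)^2 + 8*(α t x)^3*(px α t x)^2*(pt α t x)*(px α t x)*(px φ t x)*(pt φ t x)*(Real.sinh (Λ t x))^2 + 2*(α t x)^3*(px α t x)^2*(pt α t x)*(px α t x)*(px Λ t x)*(pt Λ t x) + (-4)*(α t x)^3*(px α t x)^3*(px α t x)*(pt φ t x)^2*(Real.sinh (Λ t x))^2 + (-4)*(α t x)^3*(px α t x)^3*(px α t x)*(px φ t x)^2*(Real.sinh (Λ t x))^2 + (-1)*(α t x)^3*(px α t x)^3*(px α t x)*(pt Λ t x)^2 + (-1)*(α t x)^3*(px α t x)^3*(px α t x)*(px Λ t x)^2 + 8*(α t x)^4*(pt α t x)^2*(px (pt α) t x)*(px φ t x)*(pt φ t x)*(Real.sinh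 (Λ t x))^2 + 2*(α t x)^4*(pt α t x)^2*(px (pt α) t x)*(px Λ t x)*(pt Λ t x) + 4*(α t x)^4*(pt α t x)^2*(px (px α) t x)*(pt φ t x)^2*(Real.sinh (Λ t x))^2 + 4*(α t x)^4*(pt α t x)^2*(px (px α) t x)*(px φ t x)^2*(Real.sinh (Λ t x))^2 + 1*(α t x)^4*(pt α t x)^2*(px (px α) t x)*(pt Λ t x)^2 + 1*(α t x)^4*(pt α t x)^2*(px (px α) t x)*(px Λ t x)^2 + (-8)*(α t x)^4*(pt α t x)^3*(pt φ t x)*(px (px φ) t x)*(Real.sinh (Λ t x))^2 + (-8)*(α t x)^4*(pt α t x)^3*(px φ t x)*(px (pt φ) t x)*(Real.sinh (Λ t x))^2 + (-16)*(α t x)^4*(pt α t x)^3*(px Λ t x)*(px φ t x)*(pt φ t x)*(Real.sinh (Λ t x))*(Real.cosh (Λ t x)) + (-2)*(α t x)^4*(pt α t x)^3*(pt Λ t x)*(px (px Λ) t x) + (-2)*(α t x)^4*(pt α t x)^3*(px Λ t x)*(px (pt Λ) t x) + (-8)*(α t x)^4*(px α t x)*(pt α t x)*(px (pt α) t x)*(pt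 φ t x)^2*(Real.sinh (Λ t x))^2 + (-8)*(α t x)^4*(px α t x)*(pt α t x)*(px (pt α) t x)*(px φ t x)^2*(Real.sinh (Λ t x))^2 + (-2)*(α t x)^4*(px α t x)*(pt α t x)*(px (pt α) t x)*(pt Λ t x)^2 + (-2)*(α t x)^4*(px α t x)*(pt α t x)*(px (pt α) t x)*(px Λ t x)^2 + (-16)*(α t x)^4*(px α t x)*(pt α t x)*(px (px α) t x)*(px φ t x)*(pt φ t x)*(Real.sinh (Λ t x))^2 + (-4)*(α t x)^4*(px α t x)*(pt α t x)*(px (px α) t x)*(px Λ t x)*(pt Λ t x) + 8*(α t x)^4*(px α t x)*(pt α t x)^2*(pt φ t x)*(px (pt φ) t x)*(Real.sinh (Λ t x))^2 + 8*(α t x)^4*(px α t x)*(pt α t x)^2*(px φ t x)*(px (px φ) t x)*(Real.sinh (Λ t x))^2 + 8*(α t x)^4*(px α t x)*(pt α t x)^2*(px Λ t x)*(pt φ t x)^2*(Real.sinh (Λ t x))*(Real.cosh (Λ t x)) + 8*(α t x)^4*(px α t x)*(pt α t x)^2*(px Λ t x)*(px φ t x)^2*(Real.sinh (Λ t x))*(Real.cosh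 (Λ t x)) + 2*(α t x)^4*(px α t x)*(pt α t x)^2*(pt Λ t x)*(px (pt Λ) t x) + 2*(α t x)^4*(px α t x)*(pt α t x)^2*(px Λ t x)*(px (px Λ) t x) + 8*(α t x)^4*(px α t x)^2*(px (pt α) t x)*(px φ t x)*(pt φ t x)*(Real.sinh (Λ t x))^2 + 2*(α t x)^4*(px α t x)^2*(px (pt α) t x)*(px Λ t x)*(pt Λ t x) + 4*(α t x)^4*(px α t x)^2*(px (px α) t x)*(pt φ t x)^2*(Real.sinh (Λ t x))^2 + 4*(α t x)^4*(px α t x)^2*(px (px α) t x)*(px φ t x)^2*(Real.sinh (Λ t x))^2 + 1*(α t x)^4*(px α t x)^2*(px (px α) t x)*(pt Λ t x)^2 + 1*(α t x)^4*(px α t x)^2*(px (px α) t x)*(px Λ t x)^2 + 8*(α t x)^4*(px α t x)^2*(pt α t x)*(pt φ t x)*(px (px φ) t x)*(Real.sinh (Λ t x))^2 + 8*(α t x)^4*(px α t x)^2*(pt α t x)*(px φ t x)*(px (pt φ) t x)*(Real.sinh (Λ t x))^2 + 16*(α t x)^4*(px α t x)^2*(pt α t x)*(px Λ t x)*(px φ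 t x)*(pt φ t x)*(Real.sinh (Λ t x))*(Real.cosh (Λ t x)) + 2*(α t x)^4*(px α t x)^2*(pt α t x)*(pt Λ t x)*(px (px Λ) t x) + 2*(α t x)^4*(px α t x)^2*(pt α t x)*(px Λ t x)*(px (pt Λ) t x) + (-8)*(α t x)^4*(px α t x)^3*(pt φ t x)*(px (pt φ) t x)*(Real.sinh (Λ t x))^2 + (-8)*(α t x)^4*(px α t x)^3*(px φ t x)*(px (px φ) t x)*(Real.sinh (Λ t x))^2 + (-8)*(α t x)^4*(px α t x)^3*(px Λ t x)*(pt φ t x)^2*(Real.sinh (Λ t x))*(Real.cosh (Λ t x)) + (-8)*(α t x)^4*(px α t x)^3*(px Λ t x)*(px φ t x)^2*(Real.sinh (Λ t x))*(Real.cosh (Λ t x)) + (-2)*(α t x)^4*(px α t x)^3*(pt Λ t x)*(px (pt Λ) t x) + (-2)*(α t x)^4*(px α t x)^3*(px Λ t x)*(px (px Λ) t x)) / ((α t x)^3 * ((pt α t x)^2 - (px α t x)^2)^2)) := by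
    have he : (fun y => pDen Λ φ α t y) = (fun y => -(α t y / ((pt α t y)^2 - (px α t y)^2) * (px α t y * ((pt α t y)^2/(α t y)^2 + (px α t y)^2/(α t y)^2 + (px Λ t y)^2 + (pt Λ t y)^2 + 4*Real.sinh (Λ t y)^2*((px φ t y)^2+(pt φ t y)^2)) - 2 * (pt α t y) * ((pt α t y) * (px α t y)/(α t y)^2 + (px Λ t y) * (pt Λ t y) + 4*Real.sinh (Λ t y)^2*((px φ t y) * (pt φ t y)))))) := by
      funext y
      have ha' : α t y ≠ 0 := (hpos t y).ne'
      have hd1 : (px α t y)^2 - (pt α t y)^2 ≠ 0 := sub_ne_zero.mpr (hne t y)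
      have hd2 : (pt α t y)^2 - (px α t y)^2 ≠ 0 := sub_ne_zero.mpr (Ne.symm (hne t y))
      simp only [pDen, kap, h1, h2]
      field_simp
      ring
    show deriv (fun y => pDen Λ φ α t y) x = _
    rw [he]
    exact hbigX.neg.deriv
  -- ratio derivatives
  have hrt : pt (fun t x => pt α t x / α t x) t x
      = (pt (pt α) t x * α t x - pt α t x * pt α t x) / (α t x)^2 := by
    show deriv (fun s => pt α s x / α s x) t = _
    exact (hatt.div hat hA0).deriv
  have hrx : px (fun t x => px α t x / α t x) t x
      = (px (px α) t x * α t x - px α t x * px α t x) / (α t x)^2 := by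
    show deriv (fun y => px α t y / α t y) x = _
    exact (haxx.div hax hA0).deriv
  -- sinh^2 derivative helpers
  have hS2t : HasDerivAt (fun s => Real.sinh (Λ s x)^2)
      (2*Real.sinh (Λ t x)*Real.cosh (Λ t x)*pt Λ t x) t := by
    refine ((hlt.sinh).pow 2).congr_deriv ?_
    norm_num
    try ring
  have hS2x : HasDerivAt (fun y => Real.sinh (Λ t y)^2)
      (2*Real.sinh (Λ t x)*Real.cosh (Λ t x)*px Λ t x) x := by
    refine ((hlx.sinh).pow 2).congr_deriv ?_
    norm_num
    try ring
  -- expanded field equations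
  have E1 : pt α t x * pt Λ t x + α t x * pt (pt Λ) t x
      - (px α t x * px Λ t x + α t x * px (px Λ) t x)
      = 2*(α t x)*(2*Real.sinh (Λ t x)*Real.cosh (Λ t x))*((pt φ t x)^2-(px φ t x)^2) := by
    have h := heqΛ t x
    rw [Real.sinh_two_mul] at h
    have d1 : pt (fun t x => α t x * pt Λ t x) t x
        = pt α t x * pt Λ t x + α t x * pt (pt Λ) t x := by
      show deriv (fun s => α s x * pt Λ s x) t = _
      exact (hat.mul hltt).deriv
    have d2 : px (fun t x => α t x * px Λ t x) t x
        = px α t x * px Λ t x + α t x * px (px Λ) t x := by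
      show deriv (fun y => α t y * px Λ t y) x = _
      exact (hax.mul hlxx).deriv
    rw [d1, d2] at h
    linarith [h]
  have E2 : (pt α t x * Real.sinh (Λ t x)^2
        + α t x * (2*Real.sinh (Λ t x)*Real.cosh (Λ t x)*pt Λ t x)) * pt φ t x
      + α t x * Real.sinh (Λ t x)^2 * pt (pt φ) t x
      - ((px α t x * Real.sinh (Λ t x)^2
        + α t x * (2*Real.sinh (Λ t x)*Real.cosh (Λ t x)*px Λ t x)) * px φ t x
      + α t x * Real.sinh (Λ t x)^2 * px (px φ) t x) = 0 := by
    have h := heqφ t x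
    have d1 : pt (fun t x => α t x * Real.sinh (Λ t x) ^ 2 * pt φ t x) t x
        = (pt α t x * Real.sinh (Λ t x)^2
            + α t x * (2*Real.sinh (Λ t x)*Real.cosh (Λ t x)*pt Λ t x)) * pt φ t x
          + α t x * Real.sinh (Λ t x)^2 * pt (pt φ) t x := by
      show deriv (fun s => α s x * Real.sinh (Λ s x) ^ 2 * pt φ s x) t = _
      exact ((hat.mul hS2t).mul hftt).deriv
    have d2 : px (fun t x => α t x * Real.sinh (Λ t x) ^ 2 * px φ t x) t x
        = (px α t x * Real.sinh (Λ t x)^2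
            + α t x * (2*Real.sinh (Λ t x)*Real.cosh (Λ t x)*px Λ t x)) * px φ t x
          + α t x * Real.sinh (Λ t x)^2 * px (px φ) t x := by
      show deriv (fun y => α t y * Real.sinh (Λ t y) ^ 2 * px φ t y) x = _
      exact ((hax.mul hS2x).mul hfxx).deriv
    rw [d1, d2] at h
    linarith [h]
  have E3 : pt (pt α) t x - px (px α) t x = 0 := heqα t x
  rw [hEt, hPx, hrt, hrx, ← clairaut α hα t x, ← clairaut Λ hΛ t x, ← clairaut φ hφ t x]
  exact keylemma (α t x) (pt α t x) (px α t x) (pt (pt α) t x) (pt (px α) t x) (px (px α) t x)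
    (pt Λ t x) (px Λ t x) (pt (pt Λ) t x) (pt (px Λ) t x) (px (px Λ) t x)
    (pt φ t x) (px φ t x) (pt (pt φ) t x) (pt (px φ) t x) (px (px φ) t x)
    (Real.sinh (Λ t x)) (Real.cosh (Λ t x)) hA0 hD0e E1 E2 E3
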